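/- The Cayley graph of the Pauli group P(1) with respect to the connection set {X, Y, Z} is isomorphic (as a simple graph) to the Möbius–Kantor graph MK. -/

import Mathlib

open Matrix Complex

/-- The underlying relation of the Möbius–Kantor graph `GP(8,3)`. -/
def mkRel (v w : ZMod 8 × Fin 2) : Bool :=
  (v.2 == 0 && w.2 == 0 && (w.1 == v.1 + 1 || v.1 == w.1 + 1)) ||
  ((v.2 == 0 && w.2 == 1 || v.2 == 1 && w.2 == 0) && v.1 == w.1) ||
  (v.2 == 1 && w.2 == 1 && (w.1 == v.1 + 3 || v.1 == w.1 + 3))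

/-- The Möbius–Kantor graph, i.e. the generalized Petersen graph `GP(8,3)`. -/
def MK : SimpleGraph (ZMod 8 × Fin 2) where
  Adj v w := mkRel v w = true
  symm := ⟨by intro v w; revert v w; decide⟩
  loopless := ⟨by intro v; revert v; decide⟩

/-- The Cayley graph of a group `G` with respect to a connection set `S`
not containing `1` and closed under inverses. -/
def cayleyGraph {G : Type*} [Group G] (S : Set G)
    (h1 : (1 : G) ∉ S) (hinv : ∀ s ∈ S, s⁻¹ ∈ S) : SimpleGraph G where
  Adj x y := x⁻¹ * y ∈ S
  symm := ⟨by
    intro x y h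
    have := hinv _ h
    simpa [_root_.mul_inv_rev] using this⟩
  loopless := ⟨by
    intro x h
    simp only [inv_mul_cancel] at h
    exact h1 h⟩

/-- The Pauli matrix `X`. -/
def pauliX : Matrix (Fin 2) (Fin 2) ℂ := !![0, 1; 1, 0]
def pauliY : Matrix (Fin 2) (Fin 2) ℂ := !![0, -I; I, 0]
def pauliZ : Matrix (Fin 2) (Fin 2) ℂ := !![1, 0; 0, -1]

lemma pauliX_sq : pauliX * pauliX = 1 := by
  simp [pauliX, Matrix.mul_fin_two, Matrix.one_fin_two]
lemma pauliY_sq : pauliY * pauliY = 1 := by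
  simp [pauliY, Matrix.mul_fin_two, Matrix.one_fin_two, Complex.I_mul_I]
lemma pauliZ_sq : pauliZ * pauliZ = 1 := by
  simp [pauliZ, Matrix.mul_fin_two, Matrix.one_fin_two]

def Xu : Matrix.GeneralLinearGroup (Fin 2) ℂ := ⟨pauliX, pauliX, pauliX_sq, pauliX_sq⟩
def Yu : Matrix.GeneralLinearGroup (Fin 2) ℂ := ⟨pauliY, pauliY, pauliY_sq, pauliY_sq⟩
def Zu : Matrix.GeneralLinearGroup (Fin 2) ℂ := ⟨pauliZ, pauliZ, pauliZ_sq, pauliZ_sq⟩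

/-- The Pauli group `P(1)`: the subgroup of `GL(2,ℂ)` generated by the Pauli matrices. -/
def P1 : Subgroup (Matrix.GeneralLinearGroup (Fin 2) ℂ) := Subgroup.closure {Xu, Yu, Zu}

/-- `X`, `Y`, `Z` as elements of the Pauli group. -/
def XP : P1 := ⟨Xu, Subgroup.subset_closure (by simp)⟩
def YP : P1 := ⟨Yu, Subgroup.subset_closure (by simp)⟩
def ZP : P1 := ⟨Zu, Subgroup.subset_closure (by simp)⟩

/-! ### Auxiliary material: the scalar matrix `i•1` as a unit. -/

def pauliI' : Matrix (Fin 2) (Fin 2) ℂ := !![I, 0; 0, I]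
def pauliI'inv : Matrix (Fin 2) (Fin 2) ℂ := !![-I, 0; 0, -I]
lemma pauliI'_mul : pauliI' * pauliI'inv = 1 := by
  simp [pauliI', pauliI'inv, Matrix.mul_fin_two, Matrix.one_fin_two, Complex.I_mul_I]
lemma pauliI'_mul' : pauliI'inv * pauliI' = 1 := by
  simp [pauliI', pauliI'inv, Matrix.mul_fin_two, Matrix.one_fin_two, Complex.I_mul_I]

def iU : Matrix.GeneralLinearGroup (Fin 2) ℂ := ⟨pauliI', pauliI'inv, pauliI'_mul, pauliI'_mul'⟩

lemma XX : Xu * Xu = 1 := Units.ext pauliX_sq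
lemma ZZ : Zu * Zu = 1 := Units.ext pauliZ_sq

lemma Xsq : Xu ^ 2 = 1 := by rw [pow_two]; exact XX
lemma Zsq : Zu ^ 2 = 1 := by rw [pow_two]; exact ZZ

lemma i4 : iU ^ 4 = 1 := by
  ext
  simp [iU, pauliI', pow_succ, Matrix.mul_fin_two, Matrix.one_fin_two, Complex.I_mul_I]

lemma comXi : Commute iU Xu := by
  apply Units.ext
  show pauliI' * pauliX = pauliX * pauliI'
  simp [pauliI', pauliX, Matrix.mul_fin_two]

lemma comZi : Commute iU Zu := by
  apply Units.ext
  show pauliI' * pauliZ = pauliZ * pauliI'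
  simp [pauliI', pauliZ, Matrix.mul_fin_two]

lemma ZXswap : Zu * Xu = iU ^ 2 * (Xu * Zu) := by
  apply Units.ext
  simp only [Units.val_mul, Units.val_pow_eq_pow_val]
  show pauliZ * pauliX = pauliI' ^ 2 * (pauliX * pauliZ)
  simp [pauliI', pauliX, pauliZ, pow_two, Matrix.mul_fin_two, Complex.I_mul_I]

lemma hY : Yu = iU * Xu * Zu := by
  apply Units.ext
  show pauliY = pauliI' * pauliX * pauliZ
  simp [pauliI', pauliX, pauliZ, pauliY, Matrix.mul_fin_two]

lemma iU_eq : iU = Xu * Yu * Zu := by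
  apply Units.ext
  show pauliI' = pauliX * pauliY * pauliZ
  simp [pauliI', pauliX, pauliZ, pauliY, Matrix.mul_fin_two]

/-! ### The abstract Pauli group `G4` -/

structure G4 where
  a : Fin 4
  p : Fin 2
  q : Fin 2
deriving DecidableEq, Fintype

instance : Mul G4 :=
  ⟨fun g h => ⟨g.a + h.a + (if g.q = 1 ∧ h.p = 1 then 2 else 0), g.p + h.p, g.q + h.q⟩⟩
instance : One G4 := ⟨⟨0, 0, 0⟩⟩
instance : Inv G4 := ⟨fun g => ⟨-g.a + (if g.p = 1 ∧ g.q = 1 then 2 else 0), g.p, g.q⟩⟩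

set_option maxHeartbeats 2000000 in
lemma G4.mul_assoc' : ∀ x y z : G4, x * y * z = x * (y * z) := by decide
lemma G4.one_mul' : ∀ x : G4, 1 * x = x := by decide
lemma G4.mul_one' : ∀ x : G4, x * 1 = x := by decide
lemma G4.inv_mul' : ∀ x : G4, x⁻¹ * x = 1 := by decide

instance : Group G4 where
  mul_assoc := G4.mul_assoc'
  one_mul := G4.one_mul'
  mul_one := G4.mul_one'
  inv_mul_cancel := G4.inv_mul'

lemma G4.mul_def (g h : G4) :
    g * h = ⟨g.a + h.a + (if g.q = 1 ∧ h.p = 1 then 2 else 0), g.p + h.p, g.q + h.q⟩ :=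
  rfl

def xG : G4 := ⟨0, 1, 0⟩
def yG : G4 := ⟨1, 1, 1⟩
def zG : G4 := ⟨0, 0, 1⟩

/-! ### The realization map `psi : G4 → GL(2,ℂ)` -/

def psi (g : G4) : Matrix.GeneralLinearGroup (Fin 2) ℂ :=
  iU ^ g.a.val * Xu ^ g.p.val * Zu ^ g.q.val

lemma swap1 (p : ℕ) : Zu * Xu ^ p = iU ^ (2 * p) * (Xu ^ p * Zu) := by
  induction p with
  | zero => simp
  | succ n ih =>
    have hcom : Xu ^ n * iU ^ 2 = iU ^ 2 * Xu ^ n := ((comXi.pow_pow 2 n).symm).eq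
    calc Zu * Xu ^ (n + 1) = (Zu * Xu ^ n) * Xu := by rw [pow_succ, mul_assoc]
      _ = iU ^ (2 * n) * (Xu ^ n * Zu) * Xu := by rw [ih]
      _ = iU ^ (2 * n) * (Xu ^ n * (Zu * Xu)) := by rw [mul_assoc, mul_assoc]
      _ = iU ^ (2 * n) * (Xu ^ n * (iU ^ 2 * (Xu * Zu))) := by rw [ZXswap]
      _ = iU ^ (2 * n) * ((Xu ^ n * iU ^ 2) * (Xu * Zu)) := by rw [mul_assoc]
      _ = iU ^ (2 * n) * (iU ^ 2 * (Xu ^ n * (Xu * Zu))) := by rw [hcom, mul_assoc]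
      _ = (iU ^ (2 * n) * iU ^ 2) * ((Xu ^ n * Xu) * Zu) := by
            rw [← mul_assoc, ← mul_assoc, mul_assoc (iU ^ (2*n) * iU ^ 2), ← mul_assoc (Xu ^ n)]
      _ = iU ^ (2 * (n + 1)) * (Xu ^ (n + 1) * Zu) := by
            rw [← pow_add, ← pow_succ]; ring_nf

lemma swapQP (q p : ℕ) : Zu ^ q * Xu ^ p = iU ^ (2 * q * p) * (Xu ^ p * Zu ^ q) := by
  induction q with
  | zero => simp
  | succ n ih =>
    have hcom : ∀ m k : ℕ, Xu ^ m * iU ^ k = iU ^ k * Xu ^ m :=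
      fun m k => ((comXi.pow_pow k m).symm).eq
    calc Zu ^ (n + 1) * Xu ^ p = Zu ^ n * (Zu * Xu ^ p) := by rw [pow_succ, mul_assoc]
      _ = Zu ^ n * (iU ^ (2 * p) * (Xu ^ p * Zu)) := by rw [swap1]
      _ = (Zu ^ n * iU ^ (2 * p)) * (Xu ^ p * Zu) := by rw [mul_assoc]
      _ = iU ^ (2 * p) * (Zu ^ n * Xu ^ p * Zu) := by
            rw [((comZi.pow_pow (2 * p) n).symm).eq, mul_assoc, ← mul_assoc (Zu ^ n)]
      _ = iU ^ (2 * p) * (iU ^ (2 * n * p) * (Xu ^ p * Zu ^ n) * Zu) := by rw [ih]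
      _ = iU ^ (2 * p + 2 * n * p) * (Xu ^ p * Zu ^ (n + 1)) := by
            simp only [← mul_assoc, ← pow_add]
            simp only [mul_assoc, ← pow_succ]
      _ = iU ^ (2 * (n + 1) * p) * (Xu ^ p * Zu ^ (n + 1)) := by
            have : 2 * p + 2 * n * p = 2 * (n + 1) * p := by ring
            rw [this]

lemma key (a p q a' p' q' : ℕ) :
    (iU ^ a * Xu ^ p * Zu ^ q) * (iU ^ a' * Xu ^ p' * Zu ^ q') =
      iU ^ (a + a' + 2 * q * p') * (Xu ^ (p + p') * Zu ^ (q + q')) := by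
  have hXi : ∀ m k : ℕ, Xu ^ m * iU ^ k = iU ^ k * Xu ^ m :=
    fun m k => ((comXi.pow_pow k m).symm).eq
  have hZi : ∀ m k : ℕ, Zu ^ m * iU ^ k = iU ^ k * Zu ^ m :=
    fun m k => ((comZi.pow_pow k m).symm).eq
  calc (iU ^ a * Xu ^ p * Zu ^ q) * (iU ^ a' * Xu ^ p' * Zu ^ q')
      = iU ^ a * (Xu ^ p * (Zu ^ q * iU ^ a') * (Xu ^ p' * Zu ^ q')) := by
        simp only [mul_assoc]
    _ = iU ^ a * (Xu ^ p * (iU ^ a' * Zu ^ q) * (Xu ^ p' * Zu ^ q')) := by rw [hZi]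
    _ = iU ^ a * (iU ^ a' * (Xu ^ p * (Zu ^ q * Xu ^ p' * Zu ^ q'))) := by
        rw [← mul_assoc (Xu ^ p), hXi]
        simp only [mul_assoc]
    _ = iU ^ a * (iU ^ a' * (Xu ^ p * (iU ^ (2 * q * p') * (Xu ^ p' * Zu ^ q) * Zu ^ q'))) := by
        rw [swapQP]
    _ = iU ^ a * iU ^ a' * iU ^ (2 * q * p') * (Xu ^ p * Xu ^ p' * (Zu ^ q * Zu ^ q')) := by
        rw [← mul_assoc (Xu ^ p), ← mul_assoc (Xu ^ p), hXi]
        simp only [mul_assoc]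
    _ = iU ^ (a + a' + 2 * q * p') * (Xu ^ (p + p') * Zu ^ (q + q')) := by
        rw [← pow_add, ← pow_add, ← pow_add, ← pow_add]

lemma iota_val : ∀ u v : Fin 2, ((if u = 1 ∧ v = 1 then (2 : Fin 4) else 0)).val
    = 2 * u.val * v.val := by decide

lemma psi_mul (g h : G4) : psi (g * h) = psi g * psi h := by
  obtain ⟨a, p, q⟩ := g
  obtain ⟨a', p', q'⟩ := h
  rw [psi, psi, psi, key, G4.mul_def]
  simp only
  rw [Fin.val_add, Fin.val_add, Fin.val_add, Fin.val_add, iota_val]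
  have e1 : ((a.val + a'.val) % 4 + 2 * q.val * p'.val) % 4
      = (a.val + a'.val + 2 * q.val * p'.val) % 4 := by omega
  rw [e1, ← pow_eq_pow_mod _ i4, ← pow_eq_pow_mod _ Xsq, ← pow_eq_pow_mod _ Zsq, mul_assoc]

def PsiGL : G4 →* Matrix.GeneralLinearGroup (Fin 2) ℂ :=
  MonoidHom.mk' psi psi_mul

lemma memX : Xu ∈ P1 := Subgroup.subset_closure (by simp)
lemma memY : Yu ∈ P1 := Subgroup.subset_closure (by simp)
lemma memZ : Zu ∈ P1 := Subgroup.subset_closure (by simp)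
lemma memI : iU ∈ P1 := by
  rw [iU_eq]; exact mul_mem (mul_mem memX memY) memZ

lemma psi_mem (g : G4) : psi g ∈ P1 :=
  mul_mem (mul_mem (pow_mem memI _) (pow_mem memX _)) (pow_mem memZ _)

def Psi : G4 →* P1 := PsiGL.codRestrict P1 psi_mem

lemma psi_x : psi xG = Xu := by simp [psi, xG]
lemma psi_y : psi yG = Yu := by rw [hY]; simp [psi, yG]
lemma psi_z : psi zG = Zu := by simp [psi, zG]

lemma psi_ker : ∀ g : G4, psi g = 1 → g = 1 := by
  intro g hg
  obtain ⟨a, p, q⟩ := g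
  fin_cases a <;> fin_cases p <;> fin_cases q <;>
    first
    | rfl
    | (exfalso
       rw [Units.ext_iff] at hg
       simp [psi, iU, Xu, Zu, pauliI', pauliX, pauliZ, pow_succ, Matrix.mul_fin_two,
         Matrix.one_fin_two] at hg
       all_goals simp [funext_iff, Fin.forall_fin_two, Complex.ext_iff] at hg
       all_goals norm_num at hg)

lemma Psi_inj : Function.Injective Psi := by
  rw [injective_iff_map_eq_one]
  intro g hg
  apply psi_ker
  exact congrArg Subtype.val hg

lemma Psi_surj : Function.Surjective Psi := by
  rintro ⟨u, hu⟩
  have : ∃ g : G4, psi g = u := by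
    refine Subgroup.closure_induction ?_ ?_ ?_ ?_ hu
    · rintro v (rfl | rfl | rfl)
      · exact ⟨xG, psi_x⟩
      · exact ⟨yG, psi_y⟩
      · exact ⟨zG, psi_z⟩
    · exact ⟨1, map_one PsiGL⟩
    · rintro v w _ _ ⟨g, rfl⟩ ⟨h, rfl⟩
      exact ⟨g * h, psi_mul g h⟩
    · rintro v _ ⟨g, rfl⟩
      exact ⟨g⁻¹, map_inv PsiGL g⟩
  obtain ⟨g, hg⟩ := this
  exact ⟨g, Subtype.ext hg⟩

noncomputable def eG : G4 ≃* P1 := MulEquiv.ofBijective Psi ⟨Psi_inj, Psi_surj⟩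

lemma Psi_xyz : Psi xG = XP ∧ Psi yG = YP ∧ Psi zG = ZP :=
  ⟨Subtype.ext psi_x, Subtype.ext psi_y, Subtype.ext psi_z⟩

lemma hS (g : G4) : (Psi g = XP ∨ Psi g = YP ∨ Psi g = ZP) ↔ (g = xG ∨ g = yG ∨ g = zG) := by
  constructor
  · rintro (h | h | h)
    · exact Or.inl (Psi_inj (h.trans Psi_xyz.1.symm))
    · exact Or.inr (Or.inl (Psi_inj (h.trans Psi_xyz.2.1.symm)))
    · exact Or.inr (Or.inr (Psi_inj (h.trans Psi_xyz.2.2.symm)))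
  · rintro (rfl | rfl | rfl)
    · exact Or.inl Psi_xyz.1
    · exact Or.inr (Or.inl Psi_xyz.2.1)
    · exact Or.inr (Or.inr Psi_xyz.2.2)

/-! ### The vertex relabelling -/

def tb : ℕ → ℕ → G4
  | 0, 0 => ⟨0, 0, 0⟩
  | 1, 0 => ⟨0, 1, 0⟩
  | 2, 0 => ⟨1, 0, 1⟩
  | 3, 0 => ⟨3, 1, 1⟩
  | 4, 0 => ⟨2, 0, 0⟩
  | 5, 0 => ⟨2, 1, 0⟩
  | 6, 0 => ⟨3, 0, 1⟩
  | 7, 0 => ⟨1, 1, 1⟩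
  | 0, 1 => ⟨0, 0, 1⟩
  | 1, 1 => ⟨0, 1, 1⟩
  | 2, 1 => ⟨1, 0, 0⟩
  | 3, 1 => ⟨3, 1, 0⟩
  | 4, 1 => ⟨2, 0, 1⟩
  | 5, 1 => ⟨2, 1, 1⟩
  | 6, 1 => ⟨3, 0, 0⟩
  | 7, 1 => ⟨1, 1, 0⟩
  | _, _ => 1

def mfun (v : ZMod 8 × Fin 2) : G4 := tb v.1.val v.2.val

lemma mfun_bij : Function.Bijective mfun := by decide

set_option maxHeartbeats 2000000 in
lemma adj_iff : ∀ v w : ZMod 8 × Fin 2,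
    mkRel v w = true ↔
      ((mfun v)⁻¹ * mfun w = xG ∨ (mfun v)⁻¹ * mfun w = yG ∨ (mfun v)⁻¹ * mfun w = zG) := by
  decide

noncomputable def eV : (ZMod 8 × Fin 2) ≃ G4 := Equiv.ofBijective mfun mfun_bij

/-- The Cayley graph of the Pauli group `P(1)` with respect to the connection set
`{X, Y, Z}` is isomorphic to the Möbius–Kantor graph. -/
theorem cayley_pauli_iso_moebiusKantor :
    ∃ (h1 : (1 : P1) ∉ ({XP, YP, ZP} : Set P1))
      (hinv : ∀ s ∈ ({XP, YP, ZP} : Set P1), s⁻¹ ∈ ({XP, YP, ZP} : Set P1)),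
      Nonempty (cayleyGraph ({XP, YP, ZP} : Set P1) h1 hinv ≃g MK) := by
  have memS : ∀ u : P1, u ∈ ({XP, YP, ZP} : Set P1) ↔ (u = XP ∨ u = YP ∨ u = ZP) := by
    intro u
    simp [Set.mem_insert_iff]
  have hEq : ∀ u : P1, Psi (eG.symm u) = u := by
    intro u
    have : eG (eG.symm u) = u := eG.apply_symm_apply u
    exact this
  have memS' : ∀ u : P1, u ∈ ({XP, YP, ZP} : Set P1) ↔
      (eG.symm u = xG ∨ eG.symm u = yG ∨ eG.symm u = zG) := by
    intro u
    rw [memS]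
    rw [← hS (eG.symm u), hEq]
  have h1 : (1 : P1) ∉ ({XP, YP, ZP} : Set P1) := by
    rw [memS']
    have : eG.symm 1 = 1 := map_one eG.symm
    rw [this]
    decide
  have hinv : ∀ s ∈ ({XP, YP, ZP} : Set P1), s⁻¹ ∈ ({XP, YP, ZP} : Set P1) := by
    intro s hs
    rw [memS'] at hs ⊢
    rw [map_inv]
    revert hs
    generalize eG.symm s = g
    revert g
    decide
  refine ⟨h1, hinv, ⟨?_⟩⟩
  refine ⟨(eG.toEquiv.symm).trans eV.symm, ?_⟩
  intro u v
  show MK.Adj _ _ ↔ u⁻¹ * v ∈ ({XP, YP, ZP} : Set P1)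
  have hmf : ∀ w : P1, mfun (eV.symm (eG.symm w)) = eG.symm w := fun w =>
    eV.apply_symm_apply (eG.symm w)
  show mkRel (eV.symm (eG.symm u)) (eV.symm (eG.symm v)) = true ↔ _
  rw [adj_iff, hmf, hmf, memS' (u⁻¹ * v), _root_.map_mul eG.symm u⁻¹ v, map_inv eG.symm u]
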